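/- Let H be a finite-dimensional Hilbert space (over ℝ or ℂ) of dimension n ≥ 1. If a bounded linear operator T : H → H is an extreme point of the closed unit ball of L(H), then T is an isometry, i.e., ‖Tx‖ = ‖x‖ for all x ∈ H. -/

import Mathlib

open RCLike Submodule

local notation "⟪" x ", " y "⟫" => @inner _ _ _ x y

set_option maxHeartbeats 1000000 in
theorem stmt_8 {𝕜 : Type*} [RCLike 𝕜]
    {H : Type*} [NormedAddCommGroup H] [InnerProductSpace 𝕜 H]
    [NormedSpace ℝ H] [IsScalarTower ℝ 𝕜 H]
    [FiniteDimensional 𝕜 H] (n : ℕ) (hn : 1 ≤ n) (hdim : Module.finrank 𝕜 H = n)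
    (T : H →L[𝕜] H)
    (hT : T ∈ Set.extremePoints ℝ (Metric.closedBall (0 : H →L[𝕜] H) 1)) :
    ∀ x : H, ‖T x‖ = ‖x‖ := by
  have hT1 : ‖T‖ ≤ 1 := by
    have := hT.1
    simpa [Metric.mem_closedBall, dist_eq_norm] using this
  have hTle : ∀ y : H, ‖T y‖ ≤ ‖y‖ := fun y => by
    simpa using T.le_of_opNorm_le hT1 y
  intro x
  by_contra hx
  have hlt : ‖T x‖ < ‖x‖ := lt_of_le_of_ne (hTle x) hx
  have hx0 : x ≠ 0 := by
    intro h; rw [h] at hlt; simp at hlt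
  have hnt : Nontrivial H := by
    have : 0 < Module.finrank 𝕜 H := by omega
    exact Module.nontrivial_of_finrank_pos this
  -- the symmetric operator T* T
  set S : H →ₗ[𝕜] H := LinearMap.adjoint (T : H →ₗ[𝕜] H) * (T : H →ₗ[𝕜] H) with hSdef
  have hS : S.IsSymmetric := LinearMap.isSymmetric_adjoint_mul_self _
  have hSapp : ∀ u v : H, ⟪S u, v⟫ = ⟪T u, T v⟫ := fun u v => by
    rw [hSdef]
    rw [Module.End.mul_apply]
    exact LinearMap.adjoint_inner_left (T : H →ₗ[𝕜] H) v (T u)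
  have hkey : ∀ u : H, re (⟪S u, u⟫ : 𝕜) = ‖T u‖ ^ 2 := fun u => by
    rw [hSapp]; exact inner_self_eq_norm_sq (𝕜 := 𝕜) _
  -- the smallest eigenvalue
  set lam : ℝ := ⨅ u : { u : H // u ≠ 0 }, re (⟪S u, u⟫ : 𝕜) / ‖(u : H)‖ ^ 2 with hlam
  have hbdd : BddBelow (Set.range fun u : { u : H // u ≠ 0 } =>
      re (⟪S u, u⟫ : 𝕜) / ‖(u : H)‖ ^ 2) := by
    refine ⟨0, ?_⟩
    rintro r ⟨u, rfl⟩
    dsimp only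
    rw [hkey]
    positivity
  have hlam_lt : lam < 1 := by
    refine lt_of_le_of_lt (ciInf_le hbdd ⟨x, hx0⟩) ?_
    rw [hkey]
    have hxpos : 0 < ‖x‖ := norm_pos_iff.mpr hx0
    rw [div_lt_one (by positivity)]
    have h0 : 0 ≤ ‖T x‖ := norm_nonneg _
    nlinarith [hlt]
  have hev : Module.End.HasEigenvalue S (lam : 𝕜) :=
    hS.hasEigenvalue_iInf_of_finiteDimensional
  obtain ⟨v, hv⟩ := hev.exists_hasEigenvector
  have hv0 : v ≠ 0 := hv.2
  -- normalized eigenvector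
  set e : H := ((‖v‖ : 𝕜))⁻¹ • v with he
  have hvpos : (0 : ℝ) < ‖v‖ := norm_pos_iff.mpr hv0
  have he1 : ‖e‖ = 1 := by
    rw [he, norm_smul, norm_inv, RCLike.norm_ofReal, abs_of_pos hvpos,
      inv_mul_cancel₀ (ne_of_gt hvpos)]
  have hse : S e = (lam : 𝕜) • e := by
    rw [he, map_smul, hv.apply_eq_smul, smul_comm]
  have hee : ⟪e, e⟫ = (1 : 𝕜) := by
    rw [inner_self_eq_norm_sq_to_K, he1]; norm_num
  have hlam_eq : lam = ‖T e‖ ^ 2 := by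
    have h1 : re (⟪S e, e⟫ : 𝕜) = lam := by
      rw [hse, inner_smul_left, hee, mul_one, conj_ofReal, ofReal_re]
    rw [← hkey e, h1]
  set c : ℝ := ‖T e‖ with hc
  have hc0 : 0 ≤ c := norm_nonneg _
  have hc1 : c < 1 := by nlinarith [hlam_eq ▸ hlam_lt]
  -- orthogonality of T e and T z for z ⊥ e
  have horth : ∀ z : H, ⟪e, z⟫ = (0 : 𝕜) → ⟪T e, T z⟫ = (0 : 𝕜) := by
    intro z hz
    rw [← hSapp, hse, inner_smul_left, hz, mul_zero]
  -- a unit vector w with T e = c • w and w ⊥ T z for z ⊥ e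
  obtain ⟨w, hw1, hTew, hworth⟩ :
      ∃ w : H, ‖w‖ = 1 ∧ T e = ((c : 𝕜)) • w ∧
        ∀ z : H, ⟪e, z⟫ = (0 : 𝕜) → ⟪w, T z⟫ = (0 : 𝕜) := by
    by_cases hTe : T e = 0
    · -- c = 0; choose w orthogonal to range T
      have hc0' : c = 0 := by rw [hc, hTe, norm_zero]
      set K : Submodule 𝕜 H := LinearMap.range (T : H →ₗ[𝕜] H) with hK
      have hKne : Kᗮ ≠ ⊥ := by
        intro hbot
        have hKtop : K = ⊤ := Submodule.orthogonal_eq_bot_iff.mp hbot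
        have hker : (0 : ℕ) < Module.finrank 𝕜 (LinearMap.ker (T : H →ₗ[𝕜] H)) := by
          rw [Module.finrank_pos_iff]
          refine ⟨⟨⟨e, ?_⟩, 0, ?_⟩⟩
          · simpa [LinearMap.mem_ker] using hTe
          · simp only [ne_eq, Submodule.mk_eq_zero]
            intro h; rw [h, norm_zero] at he1; norm_num at he1
        have hrk := LinearMap.finrank_range_add_finrank_ker (T : H →ₗ[𝕜] H)
        rw [← hK, hKtop, finrank_top] at hrk
        omega
      obtain ⟨u, huK, hu0⟩ := Submodule.exists_mem_ne_zero_of_ne_bot hKne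
      have hupos : (0 : ℝ) < ‖u‖ := norm_pos_iff.mpr hu0
      refine ⟨((‖u‖ : 𝕜))⁻¹ • u, ?_, ?_, ?_⟩
      · rw [norm_smul, norm_inv, RCLike.norm_ofReal, abs_of_pos hupos,
          inv_mul_cancel₀ (ne_of_gt hupos)]
      · rw [hTe, hc0', ofReal_zero, zero_smul]
      · intro z _
        rw [inner_smul_left]
        have h0 : (⟪T z, u⟫ : 𝕜) = 0 := (Submodule.mem_orthogonal K u).mp huK (T z) ⟨z, rfl⟩
        have : (⟪u, T z⟫ : 𝕜) = 0 := by
          rw [← inner_conj_symm, h0, map_zero]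
        rw [this, mul_zero]
    · have hcne : (c : 𝕜) ≠ 0 := by
        simp only [ne_eq, ofReal_eq_zero]
        rw [hc]; exact fun h => hTe (norm_eq_zero.mp h)
      refine ⟨((c : 𝕜))⁻¹ • T e, ?_, ?_, ?_⟩
      · rw [norm_smul, norm_inv, RCLike.norm_ofReal, ← hc, abs_of_nonneg hc0,
          inv_mul_cancel₀ (fun h => hTe (norm_eq_zero.mp h))]
      · rw [smul_smul, mul_inv_cancel₀ hcne, one_smul]
      · intro z hz
        rw [inner_smul_left, horth z hz, mul_zero]
  -- the rank-one perturbation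
  set P : H →L[𝕜] H := (innerSL 𝕜 e).smulRight w with hP
  have hPapp : ∀ y : H, P y = (⟪e, y⟫ : 𝕜) • w := fun y => by
    rw [hP, ContinuousLinearMap.smulRight_apply, innerSL_apply_apply]
  -- the key norm bound
  have bound : ∀ s : ℝ, |c + s| ≤ 1 → (T + s • P) ∈ Metric.closedBall (0 : H →L[𝕜] H) 1 := by
    intro s hs
    rw [Metric.mem_closedBall, dist_eq_norm, sub_zero]
    refine ContinuousLinearMap.opNorm_le_bound _ zero_le_one (fun y => ?_)
    rw [one_mul]
    set α : 𝕜 := ⟪e, y⟫ with hα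
    set z : H := y - α • e with hz
    have hez : ⟪e, z⟫ = (0 : 𝕜) := by
      rw [hz, inner_sub_right, inner_smul_right, hee, mul_one, sub_self]
    have hy : y = α • e + z := by rw [hz]; abel
    have happ : (T + s • P) y = (α * ((c : 𝕜) + (s : 𝕜))) • w + T z := by
      have h1 : (T + s • P) y = T y + s • (α • w) := by
        simp [ContinuousLinearMap.add_apply, ContinuousLinearMap.smul_apply, hPapp, hα]
      rw [h1, hy, map_add, map_smul, hTew, real_smul_eq_coe_smul (K := 𝕜)]
      module
    have hwz : ⟪(α * ((c : 𝕜) + (s : 𝕜))) • w, T z⟫ = (0 : 𝕜) := by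
      rw [inner_smul_left, hworth z hez, mul_zero]
    have hpy : ‖(T + s • P) y‖ ^ 2 = ‖α‖ ^ 2 * (c + s) ^ 2 + ‖T z‖ ^ 2 := by
      rw [happ, @norm_add_sq 𝕜, hwz]
      simp only [map_zero, mul_zero, add_zero]
      rw [norm_smul, hw1, mul_one, norm_mul, ← ofReal_add, RCLike.norm_ofReal, mul_pow, sq_abs]
    have hyn : ‖y‖ ^ 2 = ‖α‖ ^ 2 + ‖z‖ ^ 2 := by
      have hez' : ⟪α • e, z⟫ = (0 : 𝕜) := by
        rw [inner_smul_left, hez, mul_zero]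
      rw [hy, @norm_add_sq 𝕜, hez']
      simp only [map_zero, mul_zero, add_zero]
      rw [norm_smul, he1, mul_one]
    have hTz : ‖T z‖ ≤ ‖z‖ := hTle z
    have h1 : ‖α‖ ^ 2 * (c + s) ^ 2 ≤ ‖α‖ ^ 2 := by
      have : (c + s) ^ 2 ≤ 1 := by
        have h := abs_le.mp hs
        nlinarith [h.1, h.2]
      exact mul_le_of_le_one_right (sq_nonneg _) this
    have hsq : ‖(T + s • P) y‖ ^ 2 ≤ ‖y‖ ^ 2 := by
      rw [hpy, hyn]
      exact add_le_add h1 (pow_le_pow_left₀ (norm_nonneg _) hTz 2)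
    exact (pow_le_pow_iff_left₀ (norm_nonneg _) (norm_nonneg _) two_ne_zero).mp hsq
  set ε : ℝ := 1 - c with hε
  have hεpos : 0 < ε := by linarith
  have h1 : T + ε • P ∈ Metric.closedBall (0 : H →L[𝕜] H) 1 := by
    refine bound ε ?_
    rw [hε]; simp
  have h2 : T + (-ε) • P ∈ Metric.closedBall (0 : H →L[𝕜] H) 1 := by
    refine bound (-ε) ?_
    rw [hε, abs_le]; constructor <;> [linarith; linarith]
  have hseg : T ∈ openSegment ℝ (T + ε • P) (T + (-ε) • P) := by
    refine ⟨1/2, 1/2, by norm_num, by norm_num, by norm_num, ?_⟩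
    module
  have := hT.2 h1 h2 hseg
  have happE : T e + ε • P e = T e := by
    have h := congrArg (fun A : H →L[𝕜] H => A e) this
    simpa only [ContinuousLinearMap.add_apply, ContinuousLinearMap.smul_apply] using h
  have hw0 : w = 0 := by
    have h : ε • P e = (0 : H) := by
      have := happE
      rwa [add_eq_left] at this
    rw [hPapp, hee, one_smul] at h
    have : (ε : ℝ) ≠ 0 := ne_of_gt hεpos
    exact (smul_eq_zero.mp h).resolve_left this
  rw [hw0, norm_zero] at hw1
  norm_num at hw1
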